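/- Let f be a non-negative m-monotone submodular set function on a finite ground set 𝒩, let O ⊆ 𝒩 be a fixed (deterministic) set, and let D be a random subset of 𝒩, i.e., a probability distribution over subsets of 𝒩. Then E[f(O ∪ D)] ≥ (1 − (1 − m)·max_{u∈𝒩} Pr[u ∈ D]) · f(O). -/

import Mathlib

/-- A set function on a finite ground set is submodular if the marginal contribution of an
element can only decrease when the set grows. -/
def Submodular {α : Type*} [Fintype α] [DecidableEq α] (f : Finset α → ℝ) : Prop :=
  ∀ S T : Finset α, S ⊆ T → ∀ u, u ∉ T →
    f (insert u T) - f T ≤ f (insert u S) - f S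

/-- A set function is `m`-monotone if `m · f(S) ≤ f(T)` whenever `S ⊆ T`. -/
def MMonotone {α : Type*} [Fintype α] [DecidableEq α] (m : ℝ) (f : Finset α → ℝ) : Prop :=
  ∀ S T : Finset α, S ⊆ T → m * f S ≤ f T

namespace Stmt0Aux

variable {α : Type*} [DecidableEq α]

/-- Telescoping lower-bound sum: processing elements of `l` in order with accumulated
prefix `B`, sum the marginal `g(insert a B) - g B` over elements of `l` that lie in `S`. -/
def Tsum (g : Finset α → ℝ) : List α → Finset α → Finset α → ℝ
  | [], _, _ => 0
  | a :: t, B, S => (if a ∈ S then g (insert a B) - g B else 0) + Tsum g t (insert a B) S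

/-- Expected version of `Tsum`, with `x a` the probability that `a ∈ S`. -/
def Tx (g : Finset α → ℝ) (x : α → ℝ) : List α → Finset α → ℝ
  | [], _ => 0
  | a :: t, B => x a * (g (insert a B) - g B) + Tx g x t (insert a B)

theorem Tsum_congr (g : Finset α → ℝ) (l : List α) (B S S' : Finset α)
    (h : ∀ a ∈ l, (a ∈ S ↔ a ∈ S')) : Tsum g l B S = Tsum g l B S' := by
  induction l generalizing B with
  | nil => rfl
  | cons a t ih =>
      simp only [Tsum]
      rw [ih (insert a B) (fun b hb => h b (List.mem_cons_of_mem a hb))]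
      congr 1
      by_cases ha : a ∈ S
      · rw [if_pos ha, if_pos ((h a (List.mem_cons_self (a := a) (l := t))).mp ha)]
      · rw [if_neg ha, if_neg (fun h' => ha ((h a (List.mem_cons_self (a := a) (l := t))).mpr h'))]

theorem Tsum_key (g : Finset α → ℝ)
    (hs : ∀ S T : Finset α, S ⊆ T → ∀ u, u ∉ T →
      g (insert u T) - g T ≤ g (insert u S) - g S) :
    ∀ l : List α, l.Nodup → ∀ B S : Finset α, (∀ a ∈ l, a ∉ B) → S ⊆ l.toFinset →
      g B + Tsum g l B S ≤ g (B ∪ S) := by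
  intro l
  induction l with
  | nil =>
      intro _ B S _ hS
      have : S = ∅ := Finset.subset_empty.mp (by simpa using hS)
      simp [this, Tsum]
  | cons a t ih =>
      intro hnd B S hB hS
      have hnd' : t.Nodup := (List.nodup_cons.mp hnd).2
      have hat : a ∉ t := (List.nodup_cons.mp hnd).1
      have haB : a ∉ B := hB a (List.mem_cons_self (a := a) (l := t))
      have hB' : ∀ b ∈ t, b ∉ insert a B := by
        intro b hb
        simp only [Finset.mem_insert, not_or]
        exact ⟨fun h => hat (h ▸ hb), hB b (List.mem_cons_of_mem a hb)⟩
      by_cases ha : a ∈ S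
      · have hS' : S.erase a ⊆ t.toFinset := by
          intro b hb
          have hbne : b ≠ a := Finset.ne_of_mem_erase hb
          have : b ∈ (a :: t).toFinset := hS (Finset.mem_of_mem_erase hb)
          simp only [List.toFinset_cons, Finset.mem_insert] at this
          exact this.resolve_left hbne
        have hIH := ih hnd' (insert a B) (S.erase a) hB' hS'
        have hcongr : Tsum g t (insert a B) S = Tsum g t (insert a B) (S.erase a) := by
          apply Tsum_congr
          intro b hb
          have hbne : b ≠ a := fun h => hat (h ▸ hb)
          simp [Finset.mem_erase, hbne]
        have hunion : insert a B ∪ S.erase a = B ∪ S := by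
          ext b
          by_cases hba : b = a <;> simp [hba, ha, Finset.mem_insert, Finset.mem_erase]
        simp only [Tsum, if_pos ha, hcongr]
        rw [hunion] at hIH
        linarith
      · have hS' : S ⊆ t.toFinset := by
          intro b hb
          have : b ∈ (a :: t).toFinset := hS hb
          simp only [List.toFinset_cons, Finset.mem_insert] at this
          exact this.resolve_left (fun h => ha (h ▸ hb))
        have hIH := ih hnd' (insert a B) S hB' hS'
        have hsub : g (insert a (B ∪ S)) - g (B ∪ S) ≤ g (insert a B) - g B := by
          apply hs B (B ∪ S) Finset.subset_union_left a
          simp only [Finset.mem_union, not_or]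
          exact ⟨haB, ha⟩
        have : insert a B ∪ S = insert a (B ∪ S) := by
          ext b; by_cases hba : b = a <;> simp [hba]
        rw [this] at hIH
        simp only [Tsum, if_neg ha]
        linarith

theorem Tsum_expect [Fintype α] (g : Finset α → ℝ) (p : Finset α → ℝ) :
    ∀ (l : List α) (B : Finset α),
      ∑ S : Finset α, p S * Tsum g l B S
        = Tx g (fun u => ∑ S : Finset α, if u ∈ S then p S else 0) l B := by
  intro l
  induction l with
  | nil => intro B; simp [Tsum, Tx]
  | cons a t ih =>
      intro B
      simp only [Tsum, Tx, mul_add, Finset.sum_add_distrib, ih (insert a B)]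
      congr 1
      rw [Finset.sum_mul]
      apply Finset.sum_congr rfl
      intro S _
      by_cases ha : a ∈ S <;> simp [ha, mul_comm]

theorem Tx_bound (g : Finset α → ℝ) (x : α → ℝ) (m : ℝ)
    (hx0 : ∀ a, 0 ≤ x a)
    (hmon : ∀ S : Finset α, m * g ∅ ≤ g S) :
    ∀ l : List α, l.Pairwise (fun a b => x b ≤ x a) →
      ∀ c : ℝ, 0 ≤ c → (∀ a ∈ l, x a ≤ c) → ∀ B : Finset α,
        c * (m * g ∅) - c * g B ≤ Tx g x l B := by
  intro l
  induction l with
  | nil =>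
      intro _ c hc _ B
      have := hmon B
      simp only [Tx]
      nlinarith
  | cons a t ih =>
      intro hpw c hc hcx B
      have hpw' : t.Pairwise (fun a b => x b ≤ x a) := (List.pairwise_cons.mp hpw).2
      have hta : ∀ b ∈ t, x b ≤ x a := (List.pairwise_cons.mp hpw).1
      have hIH := ih hpw' (x a) (hx0 a) hta (insert a B)
      simp only [Tx]
      have h1 : x a * (m * g ∅) - x a * g B ≤ x a * (g (insert a B) - g B) + Tx g x t (insert a B) := by
        linarith
      have h2 : m * g ∅ - g B ≤ 0 := by linarith [hmon B]
      have hxa : x a ≤ c := hcx a (List.mem_cons_self (a := a) (l := t))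
      nlinarith
end Stmt0Aux

/-- for a non-negative `m`-monotone submodular `f`, a deterministic set `O` and a
random set `D` (given by a probability mass function `p` on subsets),
`E[f(O ∪ D)] ≥ (1 − (1 − m)·max_{u} Pr[u ∈ D]) · f(O)`. -/
theorem stmt0 {α : Type*} [Fintype α] [DecidableEq α] [Nonempty α]
    (m : ℝ) (hm : m ∈ Set.Icc (0 : ℝ) 1)
    (f : Finset α → ℝ)
    (hnn : ∀ S : Finset α, 0 ≤ f S)
    (hsub : Submodular f)
    (hmon : MMonotone m f)
    (O : Finset α)
    (p : Finset α → ℝ) (hp : ∀ S, 0 ≤ p S) (hp1 : ∑ S : Finset α, p S = 1) :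
    (1 - (1 - m) *
        (Finset.univ.sup' Finset.univ_nonempty
          (fun u : α => ∑ S : Finset α, if u ∈ S then p S else 0))) * f O
      ≤ ∑ S : Finset α, p S * f (O ∪ S) := by
  classical
  set x : α → ℝ := fun u => ∑ S : Finset α, if u ∈ S then p S else 0 with hxdef
  set q : ℝ := Finset.univ.sup' Finset.univ_nonempty x with hqdef
  set g : Finset α → ℝ := fun S => f (O ∪ S) with hgdef
  have hg0 : g ∅ = f O := by simp [hgdef]
  have hx0 : ∀ u, 0 ≤ x u := by
    intro u
    apply Finset.sum_nonneg
    intro S _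
    split
    exacts [hp S, le_rfl]
  have hxq : ∀ u, x u ≤ q := fun u => Finset.le_sup' x (Finset.mem_univ u)
  have hq0 : 0 ≤ q := le_trans (hx0 (Classical.arbitrary α)) (hxq _)
  -- g is submodular
  have hgs : ∀ S T : Finset α, S ⊆ T → ∀ u, u ∉ T →
      g (insert u T) - g T ≤ g (insert u S) - g S := by
    intro S T hST u hu
    by_cases hO : u ∈ O
    · have h1 : O ∪ insert u T = O ∪ T := by
        rw [Finset.union_insert, Finset.insert_eq_self.mpr (Finset.mem_union_left T hO)]
      have h2 : O ∪ insert u S = O ∪ S := by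
        rw [Finset.union_insert, Finset.insert_eq_self.mpr (Finset.mem_union_left S hO)]
      simp [hgdef, h1, h2]
    · have := hsub (O ∪ S) (O ∪ T) (Finset.union_subset_union_right hST) u
        (by simp [hO, hu])
      simpa [hgdef, Finset.union_insert] using this
  have hgm : ∀ S : Finset α, m * g ∅ ≤ g S := by
    intro S
    rw [hg0]
    exact hmon O (O ∪ S) Finset.subset_union_left
  -- sorted list
  set l : List α := Finset.univ.toList.mergeSort (fun a b => decide (x b ≤ x a)) with hldef
  have hperm : List.Perm l Finset.univ.toList := List.mergeSort_perm _ _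
  have hnd : l.Nodup := hperm.nodup_iff.mpr (Finset.nodup_toList _)
  have hltf : l.toFinset = Finset.univ := by
    ext a
    simp [List.mem_toFinset, hperm.mem_iff, Finset.mem_toList]
  have hpw : l.Pairwise (fun a b => x b ≤ x a) := by
    have := List.pairwise_mergeSort (le := fun a b => decide (x b ≤ x a))
      (fun a b c hab hbc => by
        simp only [decide_eq_true_eq] at *
        exact le_trans hbc hab)
      (fun a b => by
        simp only [Bool.or_eq_true, decide_eq_true_eq]
        exact le_total (x b) (x a))
      Finset.univ.toList
    exact this.imp (by simp)
  -- pointwise bound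
  have hpt : ∀ S : Finset α, g ∅ + Stmt0Aux.Tsum g l ∅ S ≤ g S := by
    intro S
    have := Stmt0Aux.Tsum_key g hgs l hnd ∅ S (by simp) (by rw [hltf]; exact S.subset_univ)
    simpa using this
  -- take expectation
  have hexp : ∑ S : Finset α, p S * Stmt0Aux.Tsum g l ∅ S = Stmt0Aux.Tx g x l ∅ :=
    Stmt0Aux.Tsum_expect g p l ∅
  have habel : q * (m * g ∅) - q * g ∅ ≤ Stmt0Aux.Tx g x l ∅ :=
    Stmt0Aux.Tx_bound g x m hx0 hgm l hpw q hq0 (fun a _ => hxq a) ∅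
  have hsum : ∑ S : Finset α, p S * (g ∅ + Stmt0Aux.Tsum g l ∅ S)
      ≤ ∑ S : Finset α, p S * g S := by
    apply Finset.sum_le_sum
    intro S _
    exact mul_le_mul_of_nonneg_left (hpt S) (hp S)
  have hlhs : ∑ S : Finset α, p S * (g ∅ + Stmt0Aux.Tsum g l ∅ S)
      = g ∅ + Stmt0Aux.Tx g x l ∅ := by
    simp only [mul_add, Finset.sum_add_distrib, ← Finset.sum_mul, hp1, one_mul, hexp]
  have hfinal : (1 - (1 - m) * q) * g ∅ ≤ ∑ S : Finset α, p S * g S := by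
    rw [hlhs] at hsum
    nlinarith
  rw [hg0] at hfinal
  exact hfinal
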